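/- arXiv:1502.03050 — 3 statements merged into one kernel-verified Lean document; each statement's English description precedes it below -/
import Mathlib

section
/- Let $c, A > 0$ and let $M : (0, \infty) \to [0,1]$ be a differentiable, nondecreasing function satisfying $1 - M(h) \leq A\, M(h)\, M'(h)$ for all $h > 0$, and suppose $\lim_{h \to 0^+} M(h) = 0$. Then there exists a constant $c' > 0$ such that $M(h) \geq c' \sqrt{h}$ for all $h \in (0,1]$. -/
theorem stmt_6 (c A : ℝ) (hc : 0 < c) (hA : 0 < A) (M M' : ℝ → ℝ)
    (hdiff : ∀ h, 0 < h → HasDerivAt M (M' h) h)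
    (hmono : ∀ h₁ h₂, 0 < h₁ → h₁ ≤ h₂ → M h₁ ≤ M h₂)
    (hrange : ∀ h, 0 < h → M h ∈ Set.Icc (0 : ℝ) 1)
    (hineq : ∀ h, 0 < h → 1 - M h ≤ A * M h * M' h)
    (hlim : Filter.Tendsto M (nhdsWithin 0 (Set.Ioi 0)) (nhds 0)) :
    ∃ c' : ℝ, 0 < c' ∧ ∀ h ∈ Set.Ioc (0 : ℝ) 1, M h ≥ c' * Real.sqrt h := by
  have hsqA : 0 < Real.sqrt A := Real.sqrt_pos.mpr hA
  refine ⟨min (1/2) (1 / Real.sqrt A), lt_min (by norm_num) (by positivity), ?_⟩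
  rintro h ⟨hh0, hh1⟩
  by_cases hM : (1:ℝ)/2 ≤ M h
  · have hs1 : Real.sqrt h ≤ 1 := by
      rw [show (1:ℝ) = Real.sqrt 1 by simp]
      exact Real.sqrt_le_sqrt hh1
    have : min (1/2) (1/Real.sqrt A) * Real.sqrt h ≤ (1/2) * 1 :=
      mul_le_mul (min_le_left _ _) hs1 (Real.sqrt_nonneg _) (by norm_num)
    linarith
  · push_neg at hM
    set g : ℝ → ℝ := fun t => A/2 * (M t)^2 - t/2 with hg
    have hgd : ∀ t, 0 < t → HasDerivAt g (A * M t * M' t - 1/2) t := by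
      intro t ht
      have h1 := ((hdiff t ht).mul (hdiff t ht)).const_mul (A/2)
      have h2 : HasDerivAt (fun t : ℝ => t/2) (1/2) t := by
        simpa using (hasDerivAt_id t).div_const 2
      have h3 := h1.sub h2
      have hfun : g = (fun y => A / 2 * (M * M) y) - fun t => t / 2 := by
        funext s; show A/2*(M s)^2 - s/2 = A/2*(M s * M s) - s/2; ring
      rw [hfun]; exact h3.congr_deriv (by ring)
    have key : ∀ ε, 0 < ε → ε < h → g ε ≤ g h := by
      intro ε hε hεh
      have hdiffOn : ∀ t ∈ Set.Icc ε h, HasDerivAt g (A * M t * M' t - 1/2) t :=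
        fun t ht => hgd t (lt_of_lt_of_le hε ht.1)
      have hmonoOn : MonotoneOn g (Set.Icc ε h) := by
        apply monotoneOn_of_deriv_nonneg (convex_Icc ε h)
        · exact fun t ht => (hdiffOn t ht).continuousAt.continuousWithinAt
        · intro t ht
          rw [interior_Icc] at ht
          exact (hdiffOn t ⟨le_of_lt ht.1, le_of_lt ht.2⟩).differentiableAt.differentiableWithinAt
        · intro t ht
          rw [interior_Icc] at ht
          have htpos : 0 < t := lt_trans hε ht.1
          rw [(hgd t htpos).deriv]
          have hMt : M t ≤ M h := hmono t h htpos (le_of_lt ht.2)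
          have := hineq t htpos
          nlinarith
      exact hmonoOn (Set.left_mem_Icc.mpr (le_of_lt hεh))
        (Set.right_mem_Icc.mpr (le_of_lt hεh)) (le_of_lt hεh)
    have htend : Filter.Tendsto g (nhdsWithin 0 (Set.Ioi 0)) (nhds 0) := by
      have h1 : Filter.Tendsto g (nhdsWithin 0 (Set.Ioi 0))
          (nhds (A/2 * (0:ℝ)^2 - 0/2)) := by
        apply Filter.Tendsto.sub
        · exact ((hlim.pow 2).const_mul (A/2))
        · exact (Filter.tendsto_id.div_const 2).mono_left nhdsWithin_le_nhds
      simpa using h1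
    have h0le : (0:ℝ) ≤ g h := by
      apply le_of_tendsto htend
      filter_upwards [Ioo_mem_nhdsGT hh0] with ε hε using key ε hε.1 hε.2
    have hMh0 : 0 ≤ M h := (hrange h hh0).1
    have hsq : h / A ≤ (M h)^2 := by
      have hgh : A/2 * (M h)^2 - h/2 ≥ 0 := h0le
      rw [div_le_iff₀ hA]
      nlinarith
    have hle := Real.sqrt_le_sqrt hsq
    rw [Real.sqrt_sq hMh0] at hle
    have heq : Real.sqrt (h / A) = (1 / Real.sqrt A) * Real.sqrt h := by
      rw [Real.sqrt_div (le_of_lt hh0)]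
      ring
    calc min (1/2) (1/Real.sqrt A) * Real.sqrt h
        ≤ (1/Real.sqrt A) * Real.sqrt h :=
          mul_le_mul_of_nonneg_right (min_le_right _ _) (Real.sqrt_nonneg _)
      _ = Real.sqrt (h/A) := heq.symm
      _ ≤ M h := hle
end

section
/- Let $A > 0$ and let $M : (0, \infty) \to [0,1]$ be a differentiable, nondecreasing function satisfying $1 - M(h)^2 \leq A\, M(h)^2\, M'(h)$ for all $h > 0$, with $\lim_{h \to 0^+} M(h) = 0$. Then there exists a constant $c > 0$ such that $M(h) \geq c\, h^{1/3}$ for all $h \in (0,1]$. -/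
theorem stmt_7 (A : ℝ) (hA : 0 < A) (M M' : ℝ → ℝ)
    (hdiff : ∀ h, 0 < h → HasDerivAt M (M' h) h)
    (hmono : ∀ h₁ h₂, 0 < h₁ → h₁ ≤ h₂ → M h₁ ≤ M h₂)
    (hrange : ∀ h, 0 < h → M h ∈ Set.Icc (0 : ℝ) 1)
    (hineq : ∀ h, 0 < h → 1 - M h ^ 2 ≤ A * M h ^ 2 * M' h)
    (hlim : Filter.Tendsto M (nhdsWithin 0 (Set.Ioi 0)) (nhds 0)) :
    ∃ c : ℝ, 0 < c ∧ ∀ h ∈ Set.Ioc (0 : ℝ) 1, M h ≥ c * h ^ ((1 : ℝ) / 3) := by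
  obtain ⟨δ, hδpos, hδ⟩ := Metric.tendsto_nhdsWithin_nhds.mp hlim (1/2) (by norm_num)
  set K : ℝ := 9 / (4 * A) with hKdef
  have hKpos : 0 < K := by positivity
  have hAK : A * K = 9 / 4 := by
    rw [hKdef, ← mul_div_assoc, div_eq_div_iff (by positivity) (by norm_num)]; ring
  set h₀ : ℝ := min (δ/2) 1 with hh₀
  have h₀pos : 0 < h₀ := lt_min (by linarith) one_pos
  have h₀le1 : h₀ ≤ 1 := min_le_right _ _
  have h₀ltδ : h₀ < δ := lt_of_le_of_lt (min_le_left _ _) (by linarith)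
  have hMhalf : ∀ h, 0 < h → h ≤ h₀ → M h ≤ 1/2 := by
    intro h hh hle
    have hd : dist (M h) 0 < 1/2 := by
      apply hδ hh
      rw [Real.dist_eq, sub_zero, abs_of_pos hh]
      linarith
    rw [Real.dist_eq, sub_zero] at hd
    calc M h ≤ |M h| := le_abs_self _
      _ ≤ 1/2 := le_of_lt hd
  -- key integrated inequality
  have key : ∀ h, 0 < h → h ≤ h₀ → K * h ≤ M h ^ 3 := by
    intro h hh hle
    have mono : ∀ ε, 0 < ε → ε ≤ h → M ε ^ 3 - K * ε ≤ M h ^ 3 - K * h := by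
      intro ε hε hεh
      have hderiv : ∀ x, 0 < x → HasDerivAt (fun x => M x ^ 3 - K * x)
          ((3 : ℕ) * M x ^ 2 * M' x - K) x := by
        intro x hx
        have h1 := (hdiff x hx).pow 3
        have h3 : ((3 : ℕ) : ℝ) * M x ^ 2 * M' x - K = ((3 : ℕ) : ℝ) * M x ^ (3 - 1) * M' x - K * 1 := by
          norm_num
        rw [h3]; exact h1.sub ((hasDerivAt_id x).const_mul K)
      have hcont : ContinuousOn (fun x => M x ^ 3 - K * x) (Set.Icc ε h) := by
        intro x hx
        exact (hderiv x (lt_of_lt_of_le hε hx.1)).continuousAt.continuousWithinAt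
      have hmonoOn : MonotoneOn (fun x => M x ^ 3 - K * x) (Set.Icc ε h) := by
        apply monotoneOn_of_deriv_nonneg (convex_Icc ε h) hcont
        · intro x hx
          rw [interior_Icc] at hx
          exact (hderiv x (lt_trans hε hx.1)).differentiableAt.differentiableWithinAt
        · intro x hx
          rw [interior_Icc] at hx
          have hx0 : 0 < x := lt_trans hε hx.1
          rw [(hderiv x hx0).deriv]
          have hM := hMhalf x hx0 (le_trans (le_of_lt hx.2) hle)
          have hM0 := (hrange x hx0).1
          have hi := hineq x hx0
          have h34 : (3:ℝ)/4 ≤ A * M x ^ 2 * M' x := by nlinarith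
          -- 3 * M x ^2 * M' x ≥ K since A * K = 9/4
          push_cast
          nlinarith [mul_pos hA hKpos]
      have := hmonoOn ⟨le_refl ε, hεh⟩ ⟨hεh, le_refl h⟩ hεh
      simpa using this
    have htend : Filter.Tendsto (fun ε => M ε ^ 3 - K * ε)
        (nhdsWithin 0 (Set.Ioi 0)) (nhds 0) := by
      have h1 : Filter.Tendsto (fun ε => M ε ^ 3) (nhdsWithin 0 (Set.Ioi 0))
          (nhds 0) := by
        simpa using hlim.pow 3
      have h2 : Filter.Tendsto (fun ε : ℝ => K * ε) (nhdsWithin 0 (Set.Ioi 0))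
          (nhds 0) := by
        have : Filter.Tendsto (fun ε : ℝ => K * ε) (nhds 0) (nhds 0) := by
          simpa using (continuous_mul_left K).tendsto (0:ℝ)
        exact this.mono_left nhdsWithin_le_nhds
      simpa using h1.sub h2
    have hev : ∀ᶠ ε in nhdsWithin (0:ℝ) (Set.Ioi 0),
        M ε ^ 3 - K * ε ≤ M h ^ 3 - K * h := by
      filter_upwards [Ioo_mem_nhdsGT_of_mem (Set.mem_Ico.mpr ⟨le_refl 0, hh⟩)]
        with ε hε
      exact mono ε hε.1 (le_of_lt hε.2)
    have h0le : (0:ℝ) ≤ M h ^ 3 - K * h := le_of_tendsto htend hev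
    linarith
  refine ⟨K ^ ((1:ℝ)/3) * h₀ ^ ((1:ℝ)/3), by positivity, ?_⟩
  have cube : ∀ b : ℝ, 0 ≤ b → (b ^ ((1:ℝ)/3)) ^ 3 = b := by
    intro b hb
    rw [← Real.rpow_natCast (b ^ ((1:ℝ)/3)) 3, ← Real.rpow_mul hb]
    norm_num
  have main : ∀ h, 0 < h → h ≤ h₀ → K ^ ((1:ℝ)/3) * h ^ ((1:ℝ)/3) ≤ M h := by
    intro h hh hle
    have hMh0 := (hrange h hh).1
    rw [← Real.mul_rpow (le_of_lt hKpos) (le_of_lt hh)]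
    have ha : 0 ≤ (K * h) ^ ((1:ℝ)/3) := Real.rpow_nonneg (by positivity) _
    have h3 : ((K * h) ^ ((1:ℝ)/3)) ^ 3 ≤ M h ^ 3 := by
      rw [cube _ (by positivity)]; exact key h hh hle
    exact le_of_pow_le_pow_left₀ (by norm_num) hMh0 h3
  intro h hh
  obtain ⟨hh0, hh1⟩ := hh
  have hpow_le_one : h ^ ((1:ℝ)/3) ≤ 1 :=
    Real.rpow_le_one (le_of_lt hh0) hh1 (by norm_num)
  have h₀pow_le_one : h₀ ^ ((1:ℝ)/3) ≤ 1 :=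
    Real.rpow_le_one (le_of_lt h₀pos) h₀le1 (by norm_num)
  rcases le_or_gt h h₀ with hc | hc
  · have := main h hh0 hc
    have hKnn : 0 ≤ K ^ ((1:ℝ)/3) := Real.rpow_nonneg (le_of_lt hKpos) _
    have hhnn : 0 ≤ h ^ ((1:ℝ)/3) := Real.rpow_nonneg (le_of_lt hh0) _
    nlinarith [mul_nonneg (sub_nonneg.mpr h₀pow_le_one) (mul_nonneg hKnn hhnn)]
  · have h1 := main h₀ h₀pos (le_refl h₀)
    have h2 := hmono h₀ h h₀pos (le_of_lt hc)
    have hKnn : 0 ≤ K ^ ((1:ℝ)/3) := Real.rpow_nonneg (le_of_lt hKpos) _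
    have h₀nn : 0 ≤ h₀ ^ ((1:ℝ)/3) := Real.rpow_nonneg (le_of_lt h₀pos) _
    nlinarith [mul_nonneg (sub_nonneg.mpr hpow_le_one) (mul_nonneg hKnn h₀nn)]
end

section
/- Consider Bernoulli bond percolation on a countable graph where each edge $\{x,y\}$ is independently open with probability $1 - e^{-\beta J_{x,y}}$, $J_{x,y} \geq 0$. Let $S$ be a finite set of vertices with $u \in S$, and let $A \supseteq S$ and $B$ with $B \cap S = \emptyset$. Then $\mathbb{P}_\beta[u \leftrightarrow B \text{ in } A] \leq \sum_{x \in S} \sum_{y \notin S} (1 - e^{-\beta J_{x,y}}) \, \mathbb{P}_\beta[u \leftrightarrow x \text{ in } S] \, \mathbb{P}_\beta[y \leftrightarrow B \text{ in } A]$, where $u \leftrightarrow x$ in $S$ means there is an open path from $u$ to $x$ with all vertices in $S$. -/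
open MeasureTheory

/-- `connIn A ω u x`: in the percolation configuration `ω`, the vertices `u` and `x`
are connected by an open path all of whose vertices lie in `A`. -/
def connIn {V : Type*} (A : Set V) (ω : Sym2 V → Bool) (u x : V) : Prop :=
  ∃ (K : ℕ) (v : ℕ → V), v 0 = u ∧ v K = x ∧ (∀ k ≤ K, v k ∈ A) ∧
    ∀ k < K, ω s(v k, v (k + 1)) = true

/-- `connInSet A ω u B`: `u` is connected in `A` to some vertex of `B`. -/
def connInSet {V : Type*} (A : Set V) (ω : Sym2 V → Bool) (u : V) (B : Set V) : Prop :=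
  ∃ b ∈ B, connIn A ω u b

namespace Perco

variable {V : Type*}

lemma connIn_mono {A A' : Set V} (h : A ⊆ A') {ω : Sym2 V → Bool} {u x : V}
    (hc : connIn A ω u x) : connIn A' ω u x := by
  obtain ⟨K, v, h0, hK, hm, he⟩ := hc
  exact ⟨K, v, h0, hK, fun k hk => h (hm k hk), he⟩

lemma connIn_refl {A : Set V} {ω : Sym2 V → Bool} {u : V} (hu : u ∈ A) : connIn A ω u u :=
  ⟨0, fun _ => u, rfl, rfl, fun _ _ => hu, fun k hk => absurd hk (Nat.not_lt_zero k)⟩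

lemma connIn_extend {A : Set V} {ω : Sym2 V → Bool} {u x y : V} (hc : connIn A ω u x)
    (hy : y ∈ A) (he : ω s(x, y) = true) : connIn A ω u y := by
  obtain ⟨K, v, h0, hK, hm, hedge⟩ := hc
  refine ⟨K + 1, fun k => if k ≤ K then v k else y, by simp [h0], by simp, ?_, ?_⟩
  · intro k _
    by_cases h : k ≤ K
    · simpa [h] using hm k h
    · simpa [h] using hy
  · intro k hk
    rcases Nat.lt_or_ge k K with h | h
    · have h1 : k ≤ K := h.le
      have h2 : k + 1 ≤ K := h
      simpa [h1, h2] using hedge k h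
    · have hkK : k = K := by omega
      subst hkK
      simpa [hK, Nat.lt_irrefl] using he

lemma connIn_iff_fin (A : Set V) (ω : Sym2 V → Bool) (u x : V) :
    connIn A ω u x ↔ ∃ (K : ℕ) (w : Fin (K + 1) → V),
      w 0 = u ∧ w (Fin.last K) = x ∧ (∀ i, w i ∈ A) ∧
      ∀ k : Fin K, ω s(w k.castSucc, w k.succ) = true := by
  constructor
  · rintro ⟨K, v, h0, hK, hm, he⟩
    refine ⟨K, fun i => v i, by simpa using h0, by simpa using hK,
      fun i => hm i (by omega), fun k => ?_⟩
    simpa using he k k.isLt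
  · rintro ⟨K, w, h0, hK, hm, he⟩
    refine ⟨K, fun k => w ⟨min k K, by omega⟩, ?_, ?_, fun k _ => hm _, fun k hk => ?_⟩
    · show w ⟨min 0 K, by omega⟩ = u
      rw [show (⟨min 0 K, by omega⟩ : Fin (K+1)) = 0 from Fin.ext (by simp), h0]
    · show w ⟨min K K, by omega⟩ = x
      rw [show (⟨min K K, by omega⟩ : Fin (K+1)) = Fin.last K from Fin.ext (by simp), hK]
    · show ω s(w ⟨min k K, by omega⟩, w ⟨min (k+1) K, by omega⟩) = true
      rw [show (⟨min k K, by omega⟩ : Fin (K + 1)) = (⟨k, hk⟩ : Fin K).castSucc from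
          Fin.ext (by simp [Nat.min_eq_left hk.le]),
        show (⟨min (k + 1) K, by omega⟩ : Fin (K + 1)) = (⟨k, hk⟩ : Fin K).succ from
          Fin.ext (by simp [Nat.min_eq_left hk])]
      exact he ⟨k, hk⟩

lemma measurableSet_connIn [Countable V] (m : MeasurableSpace (Sym2 V → Bool)) (A : Set V)
    (u x : V)
    (hm : ∀ a b : V, a ∈ A → b ∈ A → MeasurableSet[m] {ω : Sym2 V → Bool | ω s(a, b) = true}) :
    MeasurableSet[m] {ω : Sym2 V → Bool | connIn A ω u x} := by
  have hset : {ω : Sym2 V → Bool | connIn A ω u x} =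
      ⋃ (K : ℕ) (w : Fin (K + 1) → V)
        (_ : w 0 = u ∧ w (Fin.last K) = x ∧ ∀ i, w i ∈ A),
        ⋂ (k : Fin K), {ω : Sym2 V → Bool | ω s(w k.castSucc, w k.succ) = true} := by
    ext ω
    simp only [Set.mem_setOf_eq, Set.mem_iUnion, Set.mem_iInter, connIn_iff_fin]
    tauto
  rw [hset]
  exact MeasurableSet.iUnion fun K => MeasurableSet.iUnion fun w =>
    MeasurableSet.iUnion fun h => MeasurableSet.iInter fun k =>
      hm _ _ (h.2.2 _) (h.2.2 _)

lemma measurableSet_connInSet [Countable V] (m : MeasurableSpace (Sym2 V → Bool)) (A B : Set V)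
    (u : V)
    (hm : ∀ a b : V, a ∈ A → b ∈ A → MeasurableSet[m] {ω : Sym2 V → Bool | ω s(a, b) = true}) :
    MeasurableSet[m] {ω : Sym2 V → Bool | connInSet A ω u B} := by
  have : {ω : Sym2 V → Bool | connInSet A ω u B} =
      ⋃ (b : V) (_ : b ∈ B), {ω : Sym2 V → Bool | connIn A ω u b} := by
    ext ω; simp [connInSet]
  rw [this]
  exact MeasurableSet.iUnion fun b => MeasurableSet.iUnion fun _ =>
    measurableSet_connIn m A u b hm

/-- σ-algebra generated by the coordinates in `T`. -/
def mT (T : Set (Sym2 V)) : MeasurableSpace (Sym2 V → Bool) :=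
  ⨆ e ∈ T, MeasurableSpace.comap (fun ω => ω e) inferInstance

lemma mT_coord {T : Set (Sym2 V)} {e : Sym2 V} (he : e ∈ T) (b : Bool) :
    MeasurableSet[mT T] {ω : Sym2 V → Bool | ω e = b} := by
  have h1 : MeasurableSet[MeasurableSpace.comap (fun ω : Sym2 V → Bool => ω e) inferInstance]
      {ω : Sym2 V → Bool | ω e = b} :=
    ⟨{b}, measurableSet_singleton b, by ext ω; simp⟩
  have hle : MeasurableSpace.comap (fun ω : Sym2 V → Bool => ω e) inferInstance ≤ mT T :=
    le_iSup₂ (f := fun (e : Sym2 V) (_ : e ∈ T) =>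
      MeasurableSpace.comap (fun ω : Sym2 V → Bool => ω e) inferInstance) e he
  exact hle _ h1

lemma mT_mono {T T' : Set (Sym2 V)} (h : T ⊆ T') : mT T ≤ mT T' :=
  iSup₂_le fun e he => le_iSup₂ (f := fun (e : Sym2 V) (_ : e ∈ T') =>
    MeasurableSpace.comap (fun ω : Sym2 V → Bool => ω e) inferInstance) e (h he)

lemma mT_le_pi (T : Set (Sym2 V)) : mT T ≤ MeasurableSpace.pi :=
  iSup₂_le fun e _ => measurable_iff_comap_le.mp (measurable_pi_apply e)

section Indep

variable {P : Measure (Sym2 V → Bool)} [IsProbabilityMeasure P]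

omit [IsProbabilityMeasure P] in
lemma indep_mT
    (hind : ProbabilityTheory.iIndepFun (fun e ω => ω e) P)
    {T1 T2 : Set (Sym2 V)} (h : Disjoint T1 T2) :
    ProbabilityTheory.Indep (mT T1) (mT T2) P :=
  ProbabilityTheory.indep_iSup_of_disjoint
    (fun e => measurable_iff_comap_le.mp (measurable_pi_apply e)) hind h

lemma measure_inter3
    (hind : ProbabilityTheory.iIndepFun (fun e ω => ω e) P)
    {T1 T2 T3 : Set (Sym2 V)} (h12 : Disjoint T1 T2) (h13 : Disjoint T1 T3)
    (h23 : Disjoint T2 T3) {E1 E2 E3 : Set (Sym2 V → Bool)}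
    (hE1 : MeasurableSet[mT T1] E1) (hE2 : MeasurableSet[mT T2] E2)
    (hE3 : MeasurableSet[mT T3] E3) :
    P (E1 ∩ E2 ∩ E3) = P E1 * P E2 * P E3 := by
  have hE12 : MeasurableSet[mT (T1 ∪ T2)] (E1 ∩ E2) :=
    MeasurableSet.inter (mT_mono Set.subset_union_left _ hE1)
      (mT_mono Set.subset_union_right _ hE2)
  have step1 : P (E1 ∩ E2 ∩ E3) = P (E1 ∩ E2) * P E3 :=
    ((indep_mT hind (Disjoint.union_left h13 h23)).indepSet_of_measurableSet hE12
      hE3).measure_inter_eq_mul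
  have step2 : P (E1 ∩ E2) = P E1 * P E2 :=
    ((indep_mT hind h12).indepSet_of_measurableSet hE1 hE2).measure_inter_eq_mul
  rw [step1, step2]

end Indep

/-- Cluster event: the open cluster of `u` inside `S` is exactly `C`. -/
def clE (S : Set V) (u : V) (C : Finset V) : Set (Sym2 V → Bool) :=
  {ω | (∀ x ∈ C, connIn (↑C) ω u x) ∧
    ∀ x ∈ C, ∀ y ∈ S \ (↑C : Set V), ω s(x, y) = false}

lemma clE_spec {S : Set V} {u : V} {C : Finset V} (hCS : (↑C : Set V) ⊆ S)
    (huC : u ∈ C) {ω : Sym2 V → Bool} (hω : ω ∈ clE S u C) (z : V) :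
    connIn S ω u z ↔ z ∈ C := by
  constructor
  · rintro ⟨K, v, h0, hK, hm, he⟩
    have key : ∀ k ≤ K, v k ∈ C := by
      intro k
      induction k with
      | zero => intro _; rw [h0]; exact huC
      | succ n ih =>
        intro hn
        have hvn : v n ∈ C := ih (by omega)
        by_contra hnot
        have hyb : v (n+1) ∈ S \ (↑C : Set V) := ⟨hm (n+1) hn, hnot⟩
        have h2 := hω.2 (v n) hvn (v (n+1)) hyb
        rw [he n (by omega)] at h2
        simp at h2
    rw [← hK]; exact key K le_rfl
  · intro hz
    exact connIn_mono hCS (hω.1 z hz)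

/-- The open cluster of `u` in `S` as a finset. -/
noncomputable def clOf (S : Set V) (hS : S.Finite) (u : V) (ω : Sym2 V → Bool) : Finset V :=
  @Finset.filter _ (fun x => connIn S ω u x) (Classical.decPred _) hS.toFinset

lemma mem_clOf {S : Set V} {hS : S.Finite} {u : V} {ω : Sym2 V → Bool} {x : V} :
    x ∈ clOf S hS u ω ↔ x ∈ S ∧ connIn S ω u x := by
  classical
  rw [clOf, Finset.mem_filter, Set.Finite.mem_toFinset]

lemma clOf_mem_clE {S : Set V} (hS : S.Finite) {u : V} (ω : Sym2 V → Bool) :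
    ω ∈ clE S u (clOf S hS u ω) := by
  constructor
  · intro x hx
    obtain ⟨-, K, v, h0, hK, hm, he⟩ := mem_clOf.mp hx
    refine ⟨K, v, h0, hK, fun k hk => ?_, he⟩
    exact mem_clOf.mpr ⟨hm k hk, ⟨k, v, h0, rfl, fun j hj => hm j (le_trans hj hk),
      fun j hj => he j (lt_of_lt_of_le hj hk)⟩⟩
  · intro x hx y hy
    by_contra hcon
    have hopen : ω s(x, y) = true := by
      cases h : ω s(x, y) with
      | false => exact absurd h hcon
      | true => rfl
    have : connIn S ω u y :=
      connIn_extend (mem_clOf.mp hx).2 hy.1 hopen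
    exact hy.2 (by exact_mod_cast mem_clOf.mpr ⟨hy.1, this⟩)

/-- The set of edges with both endpoints in `S` and at least one endpoint in `C`. -/
def T1 (S : Set V) (C : Finset V) : Set (Sym2 V) :=
  {e | ∃ a ∈ (↑C : Set V), ∃ b ∈ S, e = s(a, b)}

lemma exit_edge_not_mem_T1 {S : Set V} {C : Finset V} (hCS : (↑C : Set V) ⊆ S) {x y : V}
    (hy : y ∉ S) : s(x, y) ∉ T1 S C := by
  rintro ⟨a, ha, b, hb, heq⟩
  rcases Sym2.eq_iff.mp heq with ⟨h1, h2⟩ | ⟨h1, h2⟩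
  · exact hy (by rw [h2]; exact hb)
  · exact hy (by rw [h2]; exact hCS ha)

lemma offC_edge_not_mem_T1 {S : Set V} {C : Finset V} {a b : V}
    (ha : a ∉ (↑C : Set V)) (hb : b ∉ (↑C : Set V)) : s(a, b) ∉ T1 S C := by
  rintro ⟨c, hc, d, hd, heq⟩
  rcases Sym2.eq_iff.mp heq with ⟨h1, h2⟩ | ⟨h1, h2⟩
  · exact ha (by rw [h1]; exact hc)
  · exact hb (by rw [h2]; exact hc)

lemma offC_edge_ne_exit {C : Finset V} {x y a b : V} (hx : x ∈ (↑C : Set V))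
    (ha : a ∉ (↑C : Set V)) (hb : b ∉ (↑C : Set V)) : s(a, b) ≠ s(x, y) := by
  intro heq
  rcases Sym2.eq_iff.mp heq with ⟨h1, h2⟩ | ⟨h1, h2⟩
  · exact ha (by rw [h1]; exact hx)
  · exact hb (by rw [h2]; exact hx)

lemma measurableSet_clE [Countable V] (S : Set V) (u : V) (C : Finset V)
    (hCS : (↑C : Set V) ⊆ S) : MeasurableSet[mT (T1 S C)] (clE S u C) := by
  have hrep : clE S u C =
      (⋂ (x : V) (_ : x ∈ C), {ω : Sym2 V → Bool | connIn (↑C) ω u x}) ∩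
      (⋂ (x : V) (_ : x ∈ C) (y : V) (_ : y ∈ S \ (↑C : Set V)),
        {ω : Sym2 V → Bool | ω s(x, y) = false}) := by
    ext ω
    simp only [clE, Set.mem_setOf_eq, Set.mem_inter_iff, Set.mem_iInter]
  rw [hrep]
  refine MeasurableSet.inter ?_ ?_
  · exact MeasurableSet.iInter fun x => MeasurableSet.iInter fun hx =>
      measurableSet_connIn _ _ u x fun a b ha hb => mT_coord (T := T1 S C) (e := s(a, b)) ⟨a, ha, b, hCS hb, rfl⟩ true
  · exact MeasurableSet.iInter fun x => MeasurableSet.iInter fun hx =>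
      MeasurableSet.iInter fun y => MeasurableSet.iInter fun hy =>
        mT_coord (T := T1 S C) (e := s(x, y)) ⟨x, hx, y, hy.1, rfl⟩ false

/-- The exit decomposition of a connection event. -/
lemma exit_decomp {S A B : Set V} (hS : S.Finite) {u : V} (hu : u ∈ S)
    (hBS : B ∩ S = ∅) {ω : Sym2 V → Bool} (hω : connInSet A ω u B) :
    ∃ C : Finset V, (↑C : Set V) ⊆ S ∧ u ∈ C ∧ ω ∈ clE S u C ∧
      ∃ x ∈ C, ∃ y, y ∉ S ∧ ω s(x, y) = true ∧ connInSet (A \ (↑C : Set V)) ω y B := by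
  classical
  obtain ⟨b, hbB, K, v, h0, hK, hmem, hedge⟩ := hω
  set C := clOf S hS u ω with hC
  have hCS : (↑C : Set V) ⊆ S := fun z hz => (mem_clOf.mp hz).1
  have huC : u ∈ C := mem_clOf.mpr ⟨hu, connIn_refl hu⟩
  have hbC : b ∉ C := by
    intro hb
    have hbSmem : b ∈ B ∩ S := ⟨hbB, hCS hb⟩
    rw [hBS] at hbSmem
    exact hbSmem
  have h0C : v 0 ∈ C := by rw [h0]; exact huC
  set k := Nat.findGreatest (fun k => v k ∈ C) K with hk
  have hspec : v k ∈ C := by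
    rw [hk]; exact Nat.findGreatest_spec (P := fun k => v k ∈ C) (Nat.zero_le K) h0C
  have hkK : k ≤ K := by rw [hk]; exact Nat.findGreatest_le K
  have hltK : k < K := by
    rcases Nat.lt_or_ge k K with h | h
    · exact h
    · have : k = K := by omega
      rw [this, hK] at hspec
      exact absurd hspec hbC
  have hmax : ∀ m, k < m → m ≤ K → v m ∉ C := by
    intro m h1 h2
    rw [hk] at h1
    exact Nat.findGreatest_is_greatest (P := fun k => v k ∈ C) h1 h2
  have hopen : ω s(v k, v (k + 1)) = true := hedge k hltK
  have hynotC : v (k + 1) ∉ C := hmax _ (by omega) (by omega)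
  have hynotS : v (k + 1) ∉ S := by
    intro hyS
    exact hynotC (mem_clOf.mpr ⟨hyS, connIn_extend (mem_clOf.mp hspec).2 hyS hopen⟩)
  refine ⟨C, hCS, huC, clOf_mem_clE hS ω, v k, hspec, v (k + 1), hynotS, hopen,
    b, hbB, K - (k + 1), fun j => v (k + 1 + j), rfl, ?_, ?_, ?_⟩
  · show v (k + 1 + (K - (k + 1))) = b
    rw [show k + 1 + (K - (k + 1)) = K by omega, hK]
  · intro j hj
    exact ⟨hmem _ (by omega), hmax _ (by omega) (by omega)⟩
  · intro j hj
    have h := hedge (k + 1 + j) (by omega)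
    show ω s(v (k + 1 + j), v (k + 1 + (j + 1))) = true
    rw [show k + 1 + (j + 1) = (k + 1 + j) + 1 by omega]
    exact h

end Perco
set_option maxHeartbeats 1000000 in
theorem stmt_9 {V : Type*} [Countable V] (β : ℝ) (hβ : 0 < β)
    (J : V → V → ℝ) (hJsymm : ∀ x y, J x y = J y x) (hJ : ∀ x y, 0 ≤ J x y)
    (P : Measure (Sym2 V → Bool)) [IsProbabilityMeasure P]
    (hind : ProbabilityTheory.iIndepFun
      (fun e ω => ω e) P)
    (hmarg : ∀ x y : V, P {ω | ω s(x, y) = true} =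
      ENNReal.ofReal (1 - Real.exp (-β * J x y)))
    (S A B : Set V) (hS : S.Finite) (u : V) (hu : u ∈ S) (hSA : S ⊆ A)
    (hBS : B ∩ S = ∅) :
    P {ω | connInSet A ω u B} ≤
      ∑' x : S, ∑' y : (Sᶜ : Set V),
        ENNReal.ofReal (1 - Real.exp (-β * J x y)) *
          (P {ω | connIn S ω u x} * P {ω | connInSet A ω (y : V) B}) := by
  classical
  set p : V → V → ENNReal := fun x y => ENNReal.ofReal (1 - Real.exp (-β * J x y)) with hp
  set Q : V → ENNReal := fun y => P {ω | connInSet A ω y B} with hQ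
  set P1 : V → ENNReal := fun x => P {ω | connIn S ω u x} with hP1
  set PP : Finset (Finset V) := hS.toFinset.powerset.filter (fun C => u ∈ C) with hPP
  set R : V → ENNReal := fun x => ∑' y : (Sᶜ : Set V), p x ↑y * Q ↑y with hR
  have hPPP : ∀ C ∈ PP, (↑C : Set V) ⊆ S ∧ u ∈ C := by
    intro C hC
    rw [hPP, Finset.mem_filter, Finset.mem_powerset] at hC
    exact ⟨fun z hz => hS.mem_toFinset.mp (hC.1 hz), hC.2⟩
  -- the per-term independence bound
  have hterm : ∀ C ∈ PP, ∀ x ∈ C, ∀ y : (Sᶜ : Set V),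
      P (Perco.clE S u C ∩ {ω | ω s(x, (y : V)) = true} ∩
          {ω | connInSet (A \ (↑C : Set V)) ω (y : V) B})
        ≤ P (Perco.clE S u C) * (p x ↑y * Q ↑y) := by
    intro C hC x hx y
    obtain ⟨hCS, huC⟩ := hPPP C hC
    have hyS : (↑y : V) ∉ S := y.2
    have hxC : x ∈ (↑C : Set V) := by exact_mod_cast hx
    have h12 : Disjoint (Perco.T1 S C) ({s(x, (y : V))} : Set (Sym2 V)) :=
      Set.disjoint_singleton_right.mpr (Perco.exit_edge_not_mem_T1 hCS hyS)
    have h13 : Disjoint (Perco.T1 S C) ((Perco.T1 S C ∪ {s(x, (y : V))})ᶜ) :=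
      disjoint_compl_right.mono_left Set.subset_union_left
    have h23 : Disjoint ({s(x, (y : V))} : Set (Sym2 V))
        ((Perco.T1 S C ∪ {s(x, (y : V))})ᶜ) :=
      disjoint_compl_right.mono_left Set.subset_union_right
    have hme1 : MeasurableSet[Perco.mT (Perco.T1 S C)] (Perco.clE S u C) :=
      Perco.measurableSet_clE S u C hCS
    have hme2 : MeasurableSet[Perco.mT ({s(x, (y : V))} : Set (Sym2 V))]
        {ω : Sym2 V → Bool | ω s(x, (y : V)) = true} :=
      Perco.mT_coord (T := ({s(x, (y : V))} : Set (Sym2 V))) (e := s(x, (y : V))) rfl true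
    have hme3 : MeasurableSet[Perco.mT ((Perco.T1 S C ∪ {s(x, (y : V))})ᶜ)]
        {ω : Sym2 V → Bool | connInSet (A \ (↑C : Set V)) ω (y : V) B} := by
      refine Perco.measurableSet_connInSet _ _ _ _ fun a b ha hb => ?_
      refine Perco.mT_coord (T := (Perco.T1 S C ∪ {s(x, (y : V))})ᶜ) (e := s(a, b)) ?_ true
      intro hmem
      rcases hmem with hmem | hmem
      · exact Perco.offC_edge_not_mem_T1 ha.2 hb.2 hmem
      · exact Perco.offC_edge_ne_exit hxC ha.2 hb.2 hmem
    rw [Perco.measure_inter3 hind h12 h13 h23 hme1 hme2 hme3, hmarg x ↑y, mul_assoc]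
    have hE3le : P {ω : Sym2 V → Bool | connInSet (A \ (↑C : Set V)) ω (y : V) B} ≤ Q ↑y := by
      refine measure_mono fun ω hω => ?_
      obtain ⟨b, hb, hc⟩ := hω
      exact ⟨b, hb, Perco.connIn_mono Set.diff_subset hc⟩
    exact mul_le_mul_right (mul_le_mul_right hE3le _) _
  -- the union bound decomposition
  have hsub : {ω : Sym2 V → Bool | connInSet A ω u B} ⊆
      ⋃ C ∈ PP, ⋃ x ∈ C, ⋃ y : (Sᶜ : Set V),
        (Perco.clE S u C ∩ {ω | ω s(x, (y : V)) = true} ∩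
          {ω | connInSet (A \ (↑C : Set V)) ω (y : V) B}) := by
    intro ω hω
    obtain ⟨C, hCS, huC, hclE, x, hx, y, hyS, hopen, hE3⟩ :=
      Perco.exit_decomp hS hu hBS hω
    have hCPP : C ∈ PP := by
      rw [hPP, Finset.mem_filter, Finset.mem_powerset]
      exact ⟨fun z hz => hS.mem_toFinset.mpr (hCS hz), huC⟩
    simp only [Set.mem_iUnion]
    exact ⟨C, hCPP, x, hx, ⟨y, hyS⟩, ⟨hclE, hopen⟩, hE3⟩
  -- cluster resummation
  have hclSum : ∀ x ∈ hS.toFinset,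
      (∑ C ∈ PP.filter (fun C => x ∈ C), P (Perco.clE S u C)) ≤ P1 x := by
    intro x hx
    have hdisj : (↑(PP.filter (fun C => x ∈ C)) : Set (Finset V)).PairwiseDisjoint
        (fun C => Perco.clE S u C) := by
      intro C hC C' hC' hne
      rw [Finset.coe_filter, Set.mem_setOf_eq] at hC hC'
      obtain ⟨hCS, huC⟩ := hPPP C hC.1
      obtain ⟨hCS', huC'⟩ := hPPP C' hC'.1
      refine Set.disjoint_left.mpr fun ω hω hω' => hne ?_
      have : C = C' := Finset.ext fun z =>
        ((Perco.clE_spec hCS huC hω z).symm.trans (Perco.clE_spec hCS' huC' hω' z))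
      exact this
    have hmeas : ∀ C ∈ PP.filter (fun C => x ∈ C), MeasurableSet (Perco.clE S u C) := by
      intro C hC
      rw [Finset.mem_filter] at hC
      exact Perco.mT_le_pi _ _ (Perco.measurableSet_clE S u C (hPPP C hC.1).1)
    rw [← measure_biUnion_finset hdisj hmeas]
    refine measure_mono fun ω hω => ?_
    simp only [Set.mem_iUnion] at hω
    obtain ⟨C, hC, hωC⟩ := hω
    rw [Finset.mem_filter] at hC
    obtain ⟨hCS, huC⟩ := hPPP C hC.1
    exact (Perco.clE_spec hCS huC hωC x).mpr hC.2
  -- right-hand side rewriting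
  have hRx : ∀ x : V, P1 x * R x = ∑' y : (Sᶜ : Set V), p x ↑y * (P1 x * Q ↑y) := by
    intro x
    rw [hR]
    rw [← ENNReal.tsum_mul_left]
    exact tsum_congr fun y => by ring
  have hRHS : (∑' x : (S : Set V), ∑' y : (Sᶜ : Set V),
        p ↑x ↑y * (P1 ↑x * Q ↑y)) = ∑ x ∈ hS.toFinset, P1 x * R x := by
    have h1 : (∑' a : {x // x ∈ hS.toFinset}, ∑' y : (Sᶜ : Set V), p ↑a ↑y * (P1 ↑a * Q ↑y))
        = ∑' x : (S : Set V), ∑' y : (Sᶜ : Set V), p ↑x ↑y * (P1 ↑x * Q ↑y) :=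
      (Equiv.subtypeEquivRight (fun x => hS.mem_toFinset)).tsum_eq
        (fun x : (S : Set V) => ∑' y : (Sᶜ : Set V), p ↑x ↑y * (P1 ↑x * Q ↑y))
    rw [← h1, Finset.tsum_subtype hS.toFinset
      (fun x => ∑' y : (Sᶜ : Set V), p x ↑y * (P1 x * Q ↑y))]
    exact Finset.sum_congr rfl fun x _ => (hRx x).symm
  refine le_trans (measure_mono hsub) ?_
  calc P (⋃ C ∈ PP, ⋃ x ∈ C, ⋃ y : (Sᶜ : Set V),
        (Perco.clE S u C ∩ {ω | ω s(x, (y : V)) = true} ∩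
          {ω | connInSet (A \ (↑C : Set V)) ω (y : V) B}))
      ≤ ∑ C ∈ PP, P (⋃ x ∈ C, ⋃ y : (Sᶜ : Set V),
          (Perco.clE S u C ∩ {ω | ω s(x, (y : V)) = true} ∩
            {ω | connInSet (A \ (↑C : Set V)) ω (y : V) B})) :=
        measure_biUnion_finset_le _ _
    _ ≤ ∑ C ∈ PP, ∑ x ∈ C, P (⋃ y : (Sᶜ : Set V),
          (Perco.clE S u C ∩ {ω | ω s(x, (y : V)) = true} ∩
            {ω | connInSet (A \ (↑C : Set V)) ω (y : V) B})) :=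
        Finset.sum_le_sum fun C _ => measure_biUnion_finset_le _ _
    _ ≤ ∑ C ∈ PP, ∑ x ∈ C, ∑' y : (Sᶜ : Set V),
          P (Perco.clE S u C ∩ {ω | ω s(x, (y : V)) = true} ∩
            {ω | connInSet (A \ (↑C : Set V)) ω (y : V) B}) :=
        Finset.sum_le_sum fun C _ => Finset.sum_le_sum fun x _ => measure_iUnion_le _
    _ ≤ ∑ C ∈ PP, ∑ x ∈ C, ∑' y : (Sᶜ : Set V),
          P (Perco.clE S u C) * (p x ↑y * Q ↑y) :=
        Finset.sum_le_sum fun C hC => Finset.sum_le_sum fun x hx =>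
          ENNReal.tsum_le_tsum fun y => hterm C hC x hx y
    _ = ∑ C ∈ PP, ∑ x ∈ C, P (Perco.clE S u C) * R x :=
        Finset.sum_congr rfl fun C _ => Finset.sum_congr rfl fun x _ =>
          (by rw [hR, ENNReal.tsum_mul_left])
    _ = ∑ x ∈ hS.toFinset, ∑ C ∈ PP.filter (fun C => x ∈ C), P (Perco.clE S u C) * R x := by
        refine Finset.sum_comm' fun C x => ?_
        constructor
        · rintro ⟨hC, hx⟩
          exact ⟨Finset.mem_filter.mpr ⟨hC, hx⟩,
            hS.mem_toFinset.mpr ((hPPP C hC).1 hx)⟩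
        · rintro ⟨hC, _⟩
          rw [Finset.mem_filter] at hC
          exact ⟨hC.1, hC.2⟩
    _ = ∑ x ∈ hS.toFinset, (∑ C ∈ PP.filter (fun C => x ∈ C), P (Perco.clE S u C)) * R x :=
        Finset.sum_congr rfl fun x _ => (Finset.sum_mul _ _ _).symm
    _ ≤ ∑ x ∈ hS.toFinset, P1 x * R x :=
        Finset.sum_le_sum fun x hx => mul_le_mul_left (hclSum x hx) _
    _ = ∑' x : (S : Set V), ∑' y : (Sᶜ : Set V), p ↑x ↑y * (P1 ↑x * Q ↑y) := hRHS.symm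
end
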